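/- Let G be a countable directed graph. The intersection of all meet irreducible WOT-closed two-sided ideals of the free semigroupoid algebra 𝔏_G is {0}, where an ideal is meet irreducible if it is not the intersection of two strictly larger ideals. -/

import Mathlib

noncomputable section

/-! ## Countable directed graphs and their path spaces -/

/-- A countable directed graph: countable sets of vertices and edges together
with source and range maps. -/
structure DGraph : Type 1 where
  V : Type
  E : Type
  countV : Countable V
  countE : Countable E
  src : E → V
  rng : E → V

namespace DGraph

variable (G : DGraph)

instance : Countable G.V := G.countV
instance : Countable G.E := G.countE

/-- A path of positive length is a nonempty list of edges `[e_k, …, e_1]`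
(written right to left) with `s(e_{i+1}) = r(e_i)`; a path of length zero is a vertex. -/
def Path : Type := G.V ⊕ {l : List G.E // l ≠ [] ∧ List.Chain' (fun a b => G.src a = G.rng b) l}

instance : Countable G.Path := by
  unfold Path; infer_instance

/-- The source vertex of a path. -/
def psrc : G.Path → G.V
  | .inl x => x
  | .inr l => G.src (l.1.getLast l.2.1)

/-- The range vertex of a path. -/
def prng : G.Path → G.V
  | .inl x => x
  | .inr l => G.rng (l.1.head l.2.1)

/-- The product `p q` is defined exactly when `s(p) = r(q)`. -/
def Composable (p q : G.Path) : Prop := G.psrc p = G.prng q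

/-- Composition of composable paths (`pcomp p q _` is the path "first `q`, then `p`"). -/
def pcomp : (p q : G.Path) → G.Composable p q → G.Path
  | .inl _, q, _ => q
  | .inr l, .inl _, _ => .inr l
  | .inr l, .inr m, h => .inr ⟨l.1 ++ m.1, by
      refine ⟨by simp [l.2.1], l.2.2.append m.2.2 ?_⟩
      intro a ha b hb
      rw [List.getLast?_eq_getLast_of_ne_nil l.2.1, Option.mem_some_iff] at ha
      rw [List.head?_eq_head m.2.1, Option.mem_some_iff] at hb
      subst ha; subst hb
      exact h⟩

/-- The length of a path. -/
def plen : G.Path → ℕ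
  | .inl _ => 0
  | .inr l => l.1.length

/-- The list of edges of a path (ordered from last edge traversed to first). -/
def pedges : G.Path → List G.E
  | .inl _ => []
  | .inr l => l.1

/-- A vertex regarded as a path of length zero. -/
def vpath (x : G.V) : G.Path := .inl x

/-- An edge regarded as a path of length one. -/
def epath (e : G.E) : G.Path := .inr ⟨[e], by simp; exact List.isChain_singleton _⟩

/-- There is a directed path from `x` to `y`. -/
def Reach (x y : G.V) : Prop := ∃ p : G.Path, G.psrc p = x ∧ G.prng p = y

/-- `x` and `y` are adjacent in the underlying undirected graph. -/
def UAdj (x y : G.V) : Prop :=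
  ∃ e : G.E, (G.src e = x ∧ G.rng e = y) ∨ (G.src e = y ∧ G.rng e = x)

/-- `x` and `y` lie in the same connected component of the underlying undirected graph. -/
def SameUComp : G.V → G.V → Prop := Relation.ReflTransGen G.UAdj

/-- `G` is transitive in each component: any two vertices in the same connected component
of the underlying undirected graph are joined by a directed path. -/
def TransitiveInComponents : Prop := ∀ x y : G.V, G.SameUComp x y → G.Reach x y

/-- `x` and `y` are mutually reachable, i.e. lie in the same transitive component. -/
def MutReach (x y : G.V) : Prop := G.Reach x y ∧ G.Reach y x

/-- The vertex `x` supports a loop edge. -/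
def HasLoop (x : G.V) : Prop := ∃ e : G.E, G.src e = x ∧ G.rng e = x

/-- The vertex `x` supports a cycle (a path of positive length from `x` to `x`). -/
def OnCycle (x : G.V) : Prop := ∃ p : G.Path, 0 < G.plen p ∧ G.psrc p = x ∧ G.prng p = x

end DGraph

/-! ## The free semigroupoid algebra -/

open ContinuousLinearMap in
/-- The closure of a set of Hilbert space operators in the weak operator topology. -/
def wotClosure {H : Type} [NormedAddCommGroup H] [InnerProductSpace ℂ H]
    (S : Set (H →L[ℂ] H)) : Set (H →L[ℂ] H) :=
  ((ContinuousLinearMapWOT.linearEquiv ℂ : (H →WOT[ℂ] H) ≃ₗ[ℂ] (H →L[ℂ] H)).symm) ⁻¹' closure (((ContinuousLinearMapWOT.linearEquiv ℂ : (H →WOT[ℂ] H) ≃ₗ[ℂ] (H →L[ℂ] H)).symm) '' S)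

/-- A map defined on the bounded operators of a Hilbert space is WOT-continuous on a
set `S` if it is continuous on `S` from the weak operator topology to the topology of the
target (for an operator target, use the weak operator topology there as well). -/
def WOTContinuousOn {H : Type} [NormedAddCommGroup H] [InnerProductSpace ℂ H]
    {B : Type*} [TopologicalSpace B]
    (ρ : (H →L[ℂ] H) → B) (S : Set (H →L[ℂ] H)) : Prop :=
  ContinuousOn (fun A => ρ (((ContinuousLinearMapWOT.linearEquiv ℂ : (H →WOT[ℂ] H) ≃ₗ[ℂ] (H →L[ℂ] H)).symm).symm A))
    (((ContinuousLinearMapWOT.linearEquiv ℂ : (H →WOT[ℂ] H) ≃ₗ[ℂ] (H →L[ℂ] H)).symm) '' S)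

/-- `ρ` restricts to a (ℂ-linear, multiplicative) algebra homomorphism on the set `S`. -/
structure IsHomOn {A B : Type*} [Ring A] [Ring B] [Module ℂ A] [Module ℂ B]
    (ρ : A → B) (S : Set A) : Prop where
  map_add : ∀ a ∈ S, ∀ b ∈ S, ρ (a + b) = ρ a + ρ b
  map_mul : ∀ a ∈ S, ∀ b ∈ S, ρ (a * b) = ρ a * ρ b
  map_smul : ∀ (c : ℂ), ∀ a ∈ S, ρ (c • a) = c • ρ a

namespace DGraph

variable (G : DGraph)

/-- The Fock space `ℓ²(𝔽⁺(G))` of the graph `G`. -/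
abbrev FockSpace : Type := lp (fun _ : G.Path => ℂ) 2

/-- The standard basis vector `ξ_w` of `ℓ²(𝔽⁺(G))`. -/
def xi (w : G.Path) : G.FockSpace :=
  letI := Classical.decEq G.Path
  lp.single 2 w (1 : ℂ)

/-- `L` is the left regular representation of `𝔽⁺(G)`:
`L p ξ_w = ξ_{pw}` if `s(p) = r(w)` and `L p ξ_w = 0` otherwise. -/
def IsLeftRegular (L : G.Path → (G.FockSpace →L[ℂ] G.FockSpace)) : Prop :=
  (∀ (p w : G.Path) (h : G.Composable p w), L p (G.xi w) = G.xi (G.pcomp p w h)) ∧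
  (∀ p w : G.Path, ¬ G.Composable p w → L p (G.xi w) = 0)

/-- The free semigroupoid algebra `𝔏_G`: the WOT-closed algebra generated by the left
regular representation, as a subset of `B(ℓ²(𝔽⁺(G)))`. -/
def LGset (L : G.Path → (G.FockSpace →L[ℂ] G.FockSpace)) :
    Set (G.FockSpace →L[ℂ] G.FockSpace) :=
  wotClosure ((Algebra.adjoin ℂ (Set.range L) : Subalgebra ℂ _) : Set _)

end DGraph

namespace DGraph

variable (G : DGraph)

/-- A WOT-closed two-sided ideal of the free semigroupoid algebra `𝔏_G`. -/
def IsWotClosedIdeal (L : G.Path → (G.FockSpace →L[ℂ] G.FockSpace))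
    (J : Set (G.FockSpace →L[ℂ] G.FockSpace)) : Prop :=
  J ⊆ G.LGset L ∧ (0 : G.FockSpace →L[ℂ] G.FockSpace) ∈ J ∧
  (∀ a ∈ J, ∀ b ∈ J, a + b ∈ J) ∧
  (∀ (c : ℂ), ∀ a ∈ J, c • a ∈ J) ∧
  (∀ a ∈ G.LGset L, ∀ b ∈ J, a * b ∈ J ∧ b * a ∈ J) ∧
  wotClosure J = J

/-- An ideal is meet irreducible if it is not the intersection of two strictly
larger ideals. -/
def IsMeetIrreducible (L : G.Path → (G.FockSpace →L[ℂ] G.FockSpace))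
    (J : Set (G.FockSpace →L[ℂ] G.FockSpace)) : Prop :=
  ¬ ∃ J₁ J₂, G.IsWotClosedIdeal L J₁ ∧ G.IsWotClosedIdeal L J₂ ∧
      J ⊂ J₁ ∧ J ⊂ J₂ ∧ J = J₁ ∩ J₂

end DGraph

/-! ## Path lemmas -/

namespace DGraph

variable {G : DGraph}

@[simp] lemma psrc_vpath (x : G.V) : G.psrc (G.vpath x) = x := rfl
@[simp] lemma prng_vpath (x : G.V) : G.prng (G.vpath x) = x := rfl
@[simp] lemma pedges_vpath (x : G.V) : G.pedges (G.vpath x) = [] := rfl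
@[simp] lemma plen_vpath (x : G.V) : G.plen (G.vpath x) = 0 := rfl

lemma plen_eq (p : G.Path) : G.plen p = (G.pedges p).length := by
  cases p <;> rfl

lemma pedges_pcomp (p q : G.Path) (h : G.Composable p q) :
    G.pedges (G.pcomp p q h) = G.pedges p ++ G.pedges q := by
  cases p <;> cases q <;> simp [pcomp, pedges]

lemma prng_pcomp (p q : G.Path) (h : G.Composable p q) :
    G.prng (G.pcomp p q h) = G.prng p := by
  cases p with
  | inl x => exact h.symm
  | inr l =>
    cases q with
    | inl y => rfl
    | inr m =>
      show G.rng (List.head _ _) = G.rng (List.head _ _)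
      congr 1
      exact List.head_append_of_ne_nil l.2.1

lemma psrc_pcomp (p q : G.Path) (h : G.Composable p q) :
    G.psrc (G.pcomp p q h) = G.psrc q := by
  cases p with
  | inl x => rfl
  | inr l =>
    cases q with
    | inl y => exact h
    | inr m =>
      show G.src (List.getLast _ _) = G.src (List.getLast _ _)
      congr 1
      exact List.getLast_append_of_ne_nil _ m.2.1

lemma prng_eq_psrc_of_pedges_nil {q : G.Path} (h : G.pedges q = []) : G.prng q = G.psrc q := by
  cases q with
  | inl x => rfl
  | inr l => exact absurd h l.2.1

lemma eq_vpath_of_pedges_nil {q : G.Path} (h : G.pedges q = []) : q = G.vpath (G.psrc q) := by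
  cases q with
  | inl x => rfl
  | inr l => exact absurd h l.2.1

/-- Two paths with the same edge list and the same source vertex coincide. -/
lemma path_ext {p q : G.Path} (he : G.pedges p = G.pedges q) (hs : G.psrc p = G.psrc q) :
    p = q := by
  cases p with
  | inl x =>
    cases q with
    | inl y => exact congrArg Sum.inl hs
    | inr m => exact absurd he.symm m.2.1
  | inr l =>
    cases q with
    | inl y => exact absurd he l.2.1
    | inr m => exact congrArg Sum.inr (Subtype.ext he)

/-- Two paths with the same edge list and the same range vertex coincide. -/
lemma path_ext' {p q : G.Path} (he : G.pedges p = G.pedges q) (hs : G.prng p = G.prng q) :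
    p = q := by
  cases p with
  | inl x =>
    cases q with
    | inl y => exact congrArg Sum.inl hs
    | inr m => exact absurd he.symm m.2.1
  | inr l =>
    cases q with
    | inl y => exact absurd he l.2.1
    | inr m => exact congrArg Sum.inr (Subtype.ext he)

lemma pcomp_vpath_right (p : G.Path) (h : G.Composable p (G.vpath (G.psrc p))) :
    G.pcomp p (G.vpath (G.psrc p)) h = p :=
  path_ext (by simp [pedges_pcomp]) (by simp [psrc_pcomp])

lemma pcomp_vpath_left (q : G.Path) (h : G.Composable (G.vpath (G.prng q)) q) :
    G.pcomp (G.vpath (G.prng q)) q h = q := rfl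

lemma comp_vpath_right (p : G.Path) : G.Composable p (G.vpath (G.psrc p)) := rfl

lemma comp_vpath_left (q : G.Path) : G.Composable (G.vpath (G.prng q)) q := rfl

/-- Left cancellation. -/
lemma pcomp_left_cancel {q u v : G.Path} {h1 : G.Composable q u} {h2 : G.Composable q v}
    (h : G.pcomp q u h1 = G.pcomp q v h2) : u = v := by
  have he := congrArg G.pedges h
  rw [pedges_pcomp, pedges_pcomp] at he
  have hs := congrArg G.psrc h
  rw [psrc_pcomp, psrc_pcomp] at hs
  exact path_ext (List.append_cancel_left he) hs

/-- Right cancellation. -/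
lemma pcomp_right_cancel {q u v : G.Path} {h1 : G.Composable u q} {h2 : G.Composable v q}
    (h : G.pcomp u q h1 = G.pcomp v q h2) : u = v := by
  have he := congrArg G.pedges h
  rw [pedges_pcomp, pedges_pcomp] at he
  have hs := congrArg G.prng h
  rw [prng_pcomp, prng_pcomp] at hs
  exact path_ext' (List.append_cancel_right he) hs

lemma comp_pcomp_left_iff {p q r : G.Path} (h : G.Composable q r) :
    G.Composable p (G.pcomp q r h) ↔ G.Composable p q := by
  unfold Composable; rw [prng_pcomp]

lemma comp_pcomp_right_iff {p q r : G.Path} (h : G.Composable p q) :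
    G.Composable (G.pcomp p q h) r ↔ G.Composable q r := by
  unfold Composable; rw [psrc_pcomp]

lemma pcomp_assoc {p q r : G.Path} (h1 : G.Composable p q) (h2 : G.Composable q r)
    (hA : G.Composable (G.pcomp p q h1) r) (hB : G.Composable p (G.pcomp q r h2)) :
    G.pcomp (G.pcomp p q h1) r hA = G.pcomp p (G.pcomp q r h2) hB :=
  path_ext (by simp [pedges_pcomp, List.append_assoc]) (by simp [psrc_pcomp])

end DGraph

/-! ## Fock space lemmas -/

open scoped InnerProductSpace ComplexConjugate

namespace DGraph

variable {G : DGraph}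

instance : DecidableEq G.Path := Classical.decEq _

lemma xi_def (w : G.Path) : G.xi w = lp.single 2 w (1 : ℂ) := rfl

lemma xi_apply (w u : G.Path) : (G.xi w) u = if u = w then (1 : ℂ) else 0 := by
  rw [xi_def, lp.single_apply]
  split_ifs with h
  · subst h; simp
  · simp [h]

lemma inner_xi_left (w : G.Path) (f : G.FockSpace) : ⟪G.xi w, f⟫_ℂ = f w := by
  rw [xi_def, lp.inner_single_left]
  simp [RCLike.inner_apply]

lemma inner_xi_xi (w u : G.Path) : ⟪G.xi w, G.xi u⟫_ℂ = if w = u then 1 else 0 := by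
  rw [inner_xi_left, xi_apply]

lemma vec_ext {f g : G.FockSpace} (h : ∀ u, ⟪G.xi u, f⟫_ℂ = ⟪G.xi u, g⟫_ℂ) : f = g := by
  apply lp.ext
  funext u
  have := h u
  rwa [inner_xi_left, inner_xi_left] at this

lemma ext_xi {E : Type*} [NormedAddCommGroup E] [NormedSpace ℂ E]
    (T S : G.FockSpace →L[ℂ] E) (h : ∀ u, T (G.xi u) = S (G.xi u)) : T = S := by
  ext f
  have hs : HasSum (fun u => lp.single 2 u (f u)) f := lp.hasSum_single ENNReal.ofNat_ne_top f
  have h1 : ∀ u : G.Path, lp.single 2 u (f u) = f u • G.xi u := by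
    intro u
    rw [xi_def, ← lp.single_smul, smul_eq_mul, mul_one]
  have h2 : HasSum (fun u => f u • T (G.xi u)) (T f) := by
    simpa only [h1, map_smul] using hs.mapL T
  have h3 : HasSum (fun u => f u • S (G.xi u)) (S f) := by
    simpa only [h1, map_smul] using hs.mapL S
  simp only [h] at h2
  exact h2.unique h3

end DGraph

/-! ## The left regular representation and the WOT -/

namespace DGraph

variable {G : DGraph} {L : G.Path → (G.FockSpace →L[ℂ] G.FockSpace)}

section Lrep

variable (hL : G.IsLeftRegular L)
include hL

lemma L_mul_L_comp {p q : G.Path} (h : G.Composable p q) :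
    L p * L q = L (G.pcomp p q h) := by
  apply ext_xi
  intro u
  rw [ContinuousLinearMap.mul_apply]
  by_cases hqu : G.Composable q u
  · rw [hL.1 q u hqu, hL.1 p _ ((comp_pcomp_left_iff hqu).2 h),
      hL.1 _ u ((comp_pcomp_right_iff h).2 hqu)]
    rw [pcomp_assoc h hqu]
  · rw [hL.2 q u hqu, map_zero, hL.2 _ u (fun hc => hqu ((comp_pcomp_right_iff h).1 hc))]

lemma L_mul_L_ncomp {p q : G.Path} (h : ¬ G.Composable p q) :
    L p * L q = 0 := by
  apply ext_xi
  intro u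
  rw [ContinuousLinearMap.mul_apply, ContinuousLinearMap.zero_apply]
  by_cases hqu : G.Composable q u
  · rw [hL.1 q u hqu, hL.2 p _ (fun hc => h ((comp_pcomp_left_iff hqu).1 hc))]
  · rw [hL.2 q u hqu, map_zero]

lemma mem_closure_L {a : G.FockSpace →L[ℂ] G.FockSpace}
    (ha : a ∈ Submonoid.closure (Set.range L)) : (∃ p, a = L p) ∨ a = 1 ∨ a = 0 := by
  induction ha using Submonoid.closure_induction with
  | mem b hb => obtain ⟨p, rfl⟩ := hb; exact Or.inl ⟨p, rfl⟩
  | one => exact Or.inr (Or.inl rfl)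
  | mul x y hx hy ihx ihy =>
    rcases ihx with ⟨p, rfl⟩ | rfl | rfl
    · rcases ihy with ⟨q, rfl⟩ | rfl | rfl
      · by_cases h : G.Composable p q
        · exact Or.inl ⟨_, L_mul_L_comp hL h⟩
        · exact Or.inr (Or.inr (L_mul_L_ncomp hL h))
      · exact Or.inl ⟨p, (mul_one _)⟩
      · exact Or.inr (Or.inr (mul_zero _))
    · rcases ihy with ⟨q, rfl⟩ | rfl | rfl
      · exact Or.inl ⟨q, (one_mul _)⟩
      · exact Or.inr (Or.inl (mul_one _))
      · exact Or.inr (Or.inr (mul_zero _))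
    · exact Or.inr (Or.inr (zero_mul _))

end Lrep

/-! ## WOT closure lemmas -/

open scoped InnerProductSpace

section WOT

local notation "H" => G.FockSpace
local notation "eW" => LinearEquiv.symm (ContinuousLinearMapWOT.linearEquiv ℂ : ((G.FockSpace) →WOT[ℂ] (G.FockSpace)) ≃ₗ[ℂ] ((G.FockSpace) →L[ℂ] (G.FockSpace)))

lemma subset_wotClosure (S : Set (H →L[ℂ] H)) : S ⊆ wotClosure S :=
  fun _ hA => subset_closure (Set.mem_image_of_mem _ hA)

lemma wotClosure_mono {S T : Set (H →L[ℂ] H)} (h : S ⊆ T) : wotClosure S ⊆ wotClosure T :=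
  Set.preimage_mono (closure_mono (Set.image_mono h))

lemma wotClosure_preimage_closed {C : Set ((G.FockSpace) →WOT[ℂ] (G.FockSpace))}
    (hC : IsClosed C) : wotClosure ((eW) ⁻¹' C) = (eW) ⁻¹' C := by
  refine subset_antisymm ?_ (subset_wotClosure _)
  intro A hA
  have h1 : (eW) '' ((eW) ⁻¹' C) = C :=
    Set.image_preimage_eq _ ((ContinuousLinearMapWOT.linearEquiv ℂ : (H →WOT[ℂ] H) ≃ₗ[ℂ] (H →L[ℂ] H)).symm).surjective
  have h2 : closure ((eW) '' ((eW) ⁻¹' C)) = C := by rw [h1, hC.closure_eq]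
  exact Set.mem_preimage.mpr (h2 ▸ hA)

lemma adjoin_subset_LGset :
    ((Algebra.adjoin ℂ (Set.range L) : Subalgebra ℂ _) : Set (H →L[ℂ] H)) ⊆ G.LGset L :=
  subset_wotClosure _

lemma L_mem_LGset (p : G.Path) : L p ∈ G.LGset L :=
  adjoin_subset_LGset (Algebra.subset_adjoin ⟨p, rfl⟩)

lemma one_mem_LGset : (1 : H →L[ℂ] H) ∈ G.LGset L :=
  adjoin_subset_LGset (one_mem _)

lemma zero_mem_LGset : (0 : H →L[ℂ] H) ∈ G.LGset L :=
  adjoin_subset_LGset (zero_mem _)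

lemma LGset_eq_preimage :
    G.LGset L = (eW) ⁻¹' (closure ((eW) ''
      ((Algebra.adjoin ℂ (Set.range L) : Subalgebra ℂ _) : Set (H →L[ℂ] H)))) := rfl

lemma wotClosure_LGset : wotClosure (G.LGset L) = G.LGset L := by
  rw [LGset_eq_preimage]
  exact wotClosure_preimage_closed isClosed_closure

lemma add_mem_LGset {A B : H →L[ℂ] H} (hA : A ∈ G.LGset L) (hB : B ∈ G.LGset L) :
    A + B ∈ G.LGset L := by
  let M : Submodule ℂ ((G.FockSpace) →WOT[ℂ] (G.FockSpace)) :=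
    ((Subalgebra.toSubmodule (Algebra.adjoin ℂ (Set.range L))).map
      ((ContinuousLinearMapWOT.linearEquiv ℂ : (H →WOT[ℂ] H) ≃ₗ[ℂ] (H →L[ℂ] H)).symm).toLinearMap).topologicalClosure
  have hM : ∀ X : H →L[ℂ] H, X ∈ G.LGset L ↔ (eW) X ∈ M := by
    intro X
    rw [LGset_eq_preimage]
    simp only [Set.mem_preimage, M]
    rw [← SetLike.mem_coe, Submodule.topologicalClosure_coe, Submodule.map_coe]
    rfl
  rw [hM] at hA hB ⊢
  rw [map_add]
  exact M.add_mem hA hB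

lemma smul_mem_LGset {A : H →L[ℂ] H} (c : ℂ) (hA : A ∈ G.LGset L) :
    c • A ∈ G.LGset L := by
  let M : Submodule ℂ ((G.FockSpace) →WOT[ℂ] (G.FockSpace)) :=
    ((Subalgebra.toSubmodule (Algebra.adjoin ℂ (Set.range L))).map
      ((ContinuousLinearMapWOT.linearEquiv ℂ : (H →WOT[ℂ] H) ≃ₗ[ℂ] (H →L[ℂ] H)).symm).toLinearMap).topologicalClosure
  have hM : ∀ X : H →L[ℂ] H, X ∈ G.LGset L ↔ (eW) X ∈ M := by
    intro X
    rw [LGset_eq_preimage]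
    simp only [Set.mem_preimage, M]
    rw [← SetLike.mem_coe, Submodule.topologicalClosure_coe, Submodule.map_coe]
    rfl
  rw [hM] at hA ⊢
  rw [map_smul]
  exact M.smul_mem c hA

lemma continuous_rmul (B : H →L[ℂ] H) :
    Continuous (fun a : (G.FockSpace) →WOT[ℂ] (G.FockSpace) =>
      (eW) ((((ContinuousLinearMapWOT.linearEquiv ℂ : (H →WOT[ℂ] H) ≃ₗ[ℂ] (H →L[ℂ] H)).symm).symm a) * B)) := by
  apply ContinuousLinearMapWOT.continuous_of_dual_apply_continuous
  intro x y
  exact ContinuousLinearMapWOT.continuous_dual_apply (B x) y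

lemma continuous_lmul (B : H →L[ℂ] H) :
    Continuous (fun a : (G.FockSpace) →WOT[ℂ] (G.FockSpace) =>
      (eW) (B * (((ContinuousLinearMapWOT.linearEquiv ℂ : (H →WOT[ℂ] H) ≃ₗ[ℂ] (H →L[ℂ] H)).symm).symm a))) := by
  apply ContinuousLinearMapWOT.continuous_of_dual_apply_continuous
  intro x y
  exact ContinuousLinearMapWOT.continuous_dual_apply x (y.comp B)

lemma mul_mem_LGset {A B : H →L[ℂ] H} (hA : A ∈ G.LGset L) (hB : B ∈ G.LGset L) :
    A * B ∈ G.LGset L := by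
  set S : Set ((G.FockSpace) →WOT[ℂ] (G.FockSpace)) :=
    (eW) '' ((Algebra.adjoin ℂ (Set.range L) : Subalgebra ℂ _) : Set (H →L[ℂ] H)) with hS
  have step1 : ∀ B' ∈ Algebra.adjoin ℂ (Set.range L), ∀ A' : H →L[ℂ] H,
      A' ∈ G.LGset L → A' * B' ∈ G.LGset L := by
    intro B' hB' A' hA'
    have hcont := continuous_rmul (G := G) B'
    have himg : (fun a => (eW) ((((ContinuousLinearMapWOT.linearEquiv ℂ : (H →WOT[ℂ] H) ≃ₗ[ℂ] (H →L[ℂ] H)).symm).symm a) * B')) '' S ⊆ S := by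
      rintro _ ⟨_, ⟨X, hX, rfl⟩, rfl⟩
      simp only [LinearEquiv.symm_apply_apply]
      exact ⟨X * B', mul_mem hX hB', rfl⟩
    have h2 : (eW) A' ∈ closure S := hA'
    have h4 := (image_closure_subset_closure_image hcont) (Set.mem_image_of_mem _ h2)
    simp only [LinearEquiv.symm_apply_apply] at h4
    exact (closure_mono himg) h4
  have hcont := continuous_lmul (G := G) A
  have himg : (fun a => (eW) (A * (((ContinuousLinearMapWOT.linearEquiv ℂ : (H →WOT[ℂ] H) ≃ₗ[ℂ] (H →L[ℂ] H)).symm).symm a))) '' S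
      ⊆ closure S := by
    rintro _ ⟨_, ⟨X, hX, rfl⟩, rfl⟩
    simp only [LinearEquiv.symm_apply_apply]
    exact step1 X hX A hA
  have h2 : (eW) B ∈ closure S := hB
  have h4 := (image_closure_subset_closure_image hcont) (Set.mem_image_of_mem _ h2)
  simp only [LinearEquiv.symm_apply_apply] at h4
  have h5 := (closure_mono himg) h4
  rw [closure_closure] at h5
  exact h5

end WOT

end DGraph

/-! ## The key WOT approximation principle and matrix coefficients -/

namespace DGraph

open scoped InnerProductSpace

variable {G : DGraph} {L : G.Path → (G.FockSpace →L[ℂ] G.FockSpace)}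

lemma key_principle (hL : G.IsLeftRegular L) (x y x' y' : G.FockSpace)
    (h1 : ⟪y, x⟫_ℂ = ⟪y', x'⟫_ℂ)
    (hp : ∀ p, ⟪y, L p x⟫_ℂ = ⟪y', L p x'⟫_ℂ)
    {A : G.FockSpace →L[ℂ] G.FockSpace} (hA : A ∈ G.LGset L) :
    ⟪y, A x⟫_ℂ = ⟪y', A x'⟫_ℂ := by
  have hadj' : ∀ B ∈ Submodule.span ℂ ((Submonoid.closure (Set.range L) : Submonoid _) :
      Set (G.FockSpace →L[ℂ] G.FockSpace)), ⟪y, B x⟫_ℂ = ⟪y', B x'⟫_ℂ := by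
    intro B hB'
    induction hB' using Submodule.span_induction with
    | mem b hb =>
      rcases mem_closure_L hL hb with ⟨p, rfl⟩ | rfl | rfl
      · exact hp p
      · simpa using h1
      · simp
    | zero => simp
    | add u v hu hv ihu ihv => simp [ContinuousLinearMap.add_apply, inner_add_right, ihu, ihv]
    | smul c u hu ihu => simp [ContinuousLinearMap.smul_apply, inner_smul_right, ihu]
  have hadj : ∀ B ∈ Algebra.adjoin ℂ (Set.range L), ⟪y, B x⟫_ℂ = ⟪y', B x'⟫_ℂ := by
    intro B hB
    refine hadj' B ?_
    have := Algebra.adjoin_eq_span ℂ (Set.range L)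
    rw [← this]
    exact hB
  -- pass to the WOT closure
  set C : Set ((G.FockSpace) →WOT[ℂ] (G.FockSpace)) :=
    {a | ⟪y, (((ContinuousLinearMapWOT.linearEquiv ℂ : (G.FockSpace →WOT[ℂ] G.FockSpace) ≃ₗ[ℂ] (G.FockSpace →L[ℂ] G.FockSpace)).symm).symm a) x⟫_ℂ =
         ⟪y', (((ContinuousLinearMapWOT.linearEquiv ℂ : (G.FockSpace →WOT[ℂ] G.FockSpace) ≃ₗ[ℂ] (G.FockSpace →L[ℂ] G.FockSpace)).symm).symm a) x'⟫_ℂ} with hC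
  have hclosed : IsClosed C := by
    apply isClosed_eq
    · exact ContinuousLinearMapWOT.continuous_dual_apply x (innerSL ℂ y)
    · exact ContinuousLinearMapWOT.continuous_dual_apply x' (innerSL ℂ y')
  have himg : ((ContinuousLinearMapWOT.linearEquiv ℂ : (G.FockSpace →WOT[ℂ] G.FockSpace) ≃ₗ[ℂ] (G.FockSpace →L[ℂ] G.FockSpace)).symm) ''
      ((Algebra.adjoin ℂ (Set.range L) : Subalgebra ℂ _) : Set _) ⊆ C := by
    rintro _ ⟨B, hB, rfl⟩
    show ⟪y, (((ContinuousLinearMapWOT.linearEquiv ℂ : (G.FockSpace →WOT[ℂ] G.FockSpace) ≃ₗ[ℂ] (G.FockSpace →L[ℂ] G.FockSpace)).symm).symm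
      (((ContinuousLinearMapWOT.linearEquiv ℂ : (G.FockSpace →WOT[ℂ] G.FockSpace) ≃ₗ[ℂ] (G.FockSpace →L[ℂ] G.FockSpace)).symm) B)) x⟫_ℂ = _
    rw [LinearEquiv.symm_apply_apply]
    exact hadj B hB
  have hcl : closure (((ContinuousLinearMapWOT.linearEquiv ℂ : (G.FockSpace →WOT[ℂ] G.FockSpace) ≃ₗ[ℂ] (G.FockSpace →L[ℂ] G.FockSpace)).symm) ''
      ((Algebra.adjoin ℂ (Set.range L) : Subalgebra ℂ _) : Set _)) ⊆ C :=
    closure_minimal himg hclosed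
  have hAC : ((ContinuousLinearMapWOT.linearEquiv ℂ : (G.FockSpace →WOT[ℂ] G.FockSpace) ≃ₗ[ℂ] (G.FockSpace →L[ℂ] G.FockSpace)).symm) A ∈ C := hcl hA
  rw [hC] at hAC
  simp only [Set.mem_setOf_eq, LinearEquiv.symm_apply_apply] at hAC
  exact hAC

/-- The `p`-th Fourier coefficient of an operator. -/
def coeff (p : G.Path) (A : G.FockSpace →L[ℂ] G.FockSpace) : ℂ :=
  ⟪G.xi p, A (G.xi (G.vpath (G.psrc p)))⟫_ℂ

lemma coeff_zero (p : G.Path) : coeff p (0 : G.FockSpace →L[ℂ] G.FockSpace) = 0 := by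
  simp [coeff]

lemma coeff_add (p : G.Path) (A B : G.FockSpace →L[ℂ] G.FockSpace) :
    coeff p (A + B) = coeff p A + coeff p B := by
  simp [coeff, inner_add_right]

lemma coeff_smul (p : G.Path) (c : ℂ) (A : G.FockSpace →L[ℂ] G.FockSpace) :
    coeff p (c • A) = c * coeff p A := by
  simp [coeff, inner_smul_right]

end DGraph

/-! ## Matrix coefficient computations -/

namespace DGraph

open scoped InnerProductSpace

variable {G : DGraph} {L : G.Path → (G.FockSpace →L[ℂ] G.FockSpace)}

lemma L_xi_vpath_eq (hL : G.IsLeftRegular L) (q : G.Path) :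
    L q (G.xi (G.vpath (G.psrc q))) = G.xi q := by
  have hc : G.Composable q (G.vpath (G.psrc q)) := comp_vpath_right q
  rw [hL.1 q _ hc, pcomp_vpath_right]

lemma L_xi_vpath_ne (hL : G.IsLeftRegular L) (q : G.Path) (x : G.V) (h : G.psrc q ≠ x) :
    L q (G.xi (G.vpath x)) = 0 := by
  exact hL.2 q _ h

lemma inner_xi_L_comp (hL : G.IsLeftRegular L) {q p₀ : G.Path} (hc : G.Composable q p₀)
    (f : G.FockSpace) : ⟪G.xi (G.pcomp q p₀ hc), L q f⟫_ℂ = ⟪G.xi p₀, f⟫_ℂ := by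
  have := ext_xi ((innerSL ℂ (G.xi (G.pcomp q p₀ hc))).comp (L q)) (innerSL ℂ (G.xi p₀)) ?_
  · exact congrFun (congrArg DFunLike.coe this) f
  intro u
  simp only [ContinuousLinearMap.coe_comp', Function.comp_apply, coe_innerSL_apply,
    innerSL_apply_apply]
  by_cases hqu : G.Composable q u
  · rw [hL.1 q u hqu, inner_xi_xi, inner_xi_xi]
    by_cases h : p₀ = u
    · subst h; simp
    · rw [if_neg (fun hcon => h (pcomp_left_cancel hcon)), if_neg h]
  · rw [hL.2 q u hqu, inner_zero_right, inner_xi_xi, if_neg]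
    intro h
    subst h
    exact hqu hc

lemma inner_xi_L_ncomp (hL : G.IsLeftRegular L) {q p : G.Path}
    (h : ∀ (p₀ : G.Path) (hc : G.Composable q p₀), G.pcomp q p₀ hc ≠ p)
    (f : G.FockSpace) : ⟪G.xi p, L q f⟫_ℂ = 0 := by
  have := ext_xi ((innerSL ℂ (G.xi p)).comp (L q)) 0 ?_
  · calc ⟪G.xi p, L q f⟫_ℂ = ((innerSL ℂ (G.xi p)).comp (L q)) f := rfl
      _ = (0 : G.FockSpace →L[ℂ] ℂ) f := by rw [this]
      _ = 0 := rfl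
  intro u
  simp only [ContinuousLinearMap.coe_comp', Function.comp_apply, coe_innerSL_apply,
    innerSL_apply_apply, ContinuousLinearMap.zero_apply]
  by_cases hqu : G.Composable q u
  · rw [hL.1 q u hqu, inner_xi_xi, if_neg (fun hh => h u hqu hh.symm)]
  · rw [hL.2 q u hqu, inner_zero_right]

lemma coeff_eval (hL : G.IsLeftRegular L) {A : G.FockSpace →L[ℂ] G.FockSpace}
    (hA : A ∈ G.LGset L) {p₁ q : G.Path} (hc : G.Composable p₁ q) :
    ⟪G.xi (G.pcomp p₁ q hc), A (G.xi q)⟫_ℂ = coeff p₁ A := by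
  apply key_principle hL (G.xi q) (G.xi (G.pcomp p₁ q hc))
    (G.xi (G.vpath (G.psrc p₁))) (G.xi p₁) _ _ hA
  · -- identity case
    rw [inner_xi_xi, inner_xi_xi]
    by_cases h : G.pcomp p₁ q hc = q
    · rw [if_pos h, if_pos]
      have he := congrArg G.pedges h
      rw [pedges_pcomp] at he
      have : G.pedges p₁ = [] := by
        have := congrArg List.length he
        simp at this
        exact this
      exact eq_vpath_of_pedges_nil this
    · rw [if_neg h, if_neg]
      intro hcon
      apply h
      refine path_ext ?_ ?_
      · rw [pedges_pcomp, congrArg G.pedges hcon, pedges_vpath, List.nil_append]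
      · rw [psrc_pcomp]
  · -- generator case
    intro u
    by_cases huq : G.Composable u q
    · rw [hL.1 u q huq, inner_xi_xi]
      by_cases hup : u = p₁
      · subst hup
        rw [if_pos rfl, L_xi_vpath_eq hL, inner_xi_xi, if_pos rfl]
      · rw [if_neg (fun hcon => hup (pcomp_right_cancel hcon.symm))]
        by_cases hsrc : G.psrc u = G.psrc p₁
        · rw [← hsrc, L_xi_vpath_eq hL, inner_xi_xi, if_neg (fun h => hup h.symm)]
        · rw [L_xi_vpath_ne hL u _ hsrc, inner_zero_right]
    · rw [hL.2 u q huq, inner_zero_right]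
      by_cases hsrc : G.psrc u = G.psrc p₁
      · rw [← hsrc, L_xi_vpath_eq hL, inner_xi_xi, if_neg, eq_comm]
        intro hcon
        subst hcon
        exact huq hc
      · rw [L_xi_vpath_ne hL u _ hsrc, inner_zero_right]

lemma coeff_eval_ne (hL : G.IsLeftRegular L) {A : G.FockSpace →L[ℂ] G.FockSpace}
    (hA : A ∈ G.LGset L) {p q : G.Path}
    (h : ∀ (p₁ : G.Path) (hc : G.Composable p₁ q), G.pcomp p₁ q hc ≠ p) :
    ⟪G.xi p, A (G.xi q)⟫_ℂ = 0 := by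
  have := key_principle hL (G.xi q) (G.xi p) 0 0 ?_ ?_ hA
  · rw [this, inner_zero_left]
  · rw [inner_zero_left, inner_xi_xi, if_neg]
    intro hcon
    subst hcon
    exact h (G.vpath (G.prng p)) (comp_vpath_left p) (pcomp_vpath_left p _)
  · intro u
    rw [inner_zero_left]
    by_cases huq : G.Composable u q
    · rw [hL.1 u q huq, inner_xi_xi, if_neg (fun hh => h u huq hh.symm)]
    · rw [hL.2 u q huq, inner_zero_right]

end DGraph

/-! ## Factors of a path -/

namespace DGraph

variable {G : DGraph}

/-- `p` is a factor of `w`, i.e. `w = q p q'` for some paths `q, q'`. -/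
def IsFactor (p w : G.Path) : Prop :=
  ∃ (q q' : G.Path) (h1 : G.Composable p q') (h2 : G.Composable q (G.pcomp p q' h1)),
    G.pcomp q (G.pcomp p q' h1) h2 = w

lemma isFactor_self (w : G.Path) : IsFactor w w := by
  refine ⟨G.vpath (G.prng w), G.vpath (G.psrc w), comp_vpath_right w, ?_, ?_⟩
  · show G.psrc _ = G.prng _
    rw [psrc_vpath, prng_pcomp]
  · exact path_ext (by simp [pedges_pcomp]) (by simp [psrc_pcomp])

lemma isFactor_left {p₁ q₂ : G.Path} (hc : G.Composable p₁ q₂) :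
    IsFactor p₁ (G.pcomp p₁ q₂ hc) := by
  refine ⟨G.vpath (G.prng p₁), q₂, hc, ?_, ?_⟩
  · show G.psrc _ = G.prng _
    rw [psrc_vpath, prng_pcomp]
  · exact path_ext (by simp [pedges_pcomp]) (by simp [psrc_pcomp])

lemma isFactor_right {q₁ u : G.Path} (hc : G.Composable q₁ u) :
    IsFactor u (G.pcomp q₁ u hc) := by
  refine ⟨q₁, G.vpath (G.psrc u), comp_vpath_right u, ?_, ?_⟩
  · show G.psrc _ = G.prng _
    rw [prng_pcomp]
    exact hc
  · exact path_ext (by simp [pedges_pcomp]) (by simp [psrc_pcomp])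

lemma isFactor_trans {u v w : G.Path} (huv : IsFactor u v) (hvw : IsFactor v w) :
    IsFactor u w := by
  obtain ⟨a, a', h1, h2, rfl⟩ := huv
  obtain ⟨b, b', g1, g2, hw⟩ := hvw
  have cab' : G.Composable a' b' := by
    show G.psrc _ = G.prng _
    have := g1
    unfold Composable at this
    rw [psrc_pcomp, psrc_pcomp] at this
    exact this
  have cu : G.Composable u (G.pcomp a' b' cab') := by
    show G.psrc _ = G.prng _
    rw [prng_pcomp]
    exact h1
  have cba : G.Composable b a := by
    show G.psrc _ = G.prng _
    have := g2
    unfold Composable at this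
    rw [prng_pcomp, prng_pcomp] at this
    exact this
  have cq : G.Composable (G.pcomp b a cba) (G.pcomp u (G.pcomp a' b' cab') cu) := by
    show G.psrc _ = G.prng _
    rw [psrc_pcomp, prng_pcomp]
    have := h2
    unfold Composable at this
    rw [prng_pcomp] at this
    exact this
  refine ⟨G.pcomp b a cba, G.pcomp a' b' cab', cu, cq, ?_⟩
  rw [← hw]
  exact path_ext (by simp [pedges_pcomp]) (by simp [psrc_pcomp])

lemma isFactor_plen_le {p w : G.Path} (h : IsFactor p w) : G.plen p ≤ G.plen w := by
  obtain ⟨q, q', h1, h2, hw⟩ := h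
  have := congrArg G.plen hw
  simp only [plen_eq, pedges_pcomp, List.length_append] at this ⊢
  omega

lemma isFactor_eq_of_plen {p w : G.Path} (h : IsFactor p w) (hlen : G.plen w ≤ G.plen p) :
    p = w := by
  obtain ⟨q, q', h1, h2, hw⟩ := h
  have hlens := congrArg G.plen hw
  simp only [plen_eq, pedges_pcomp, List.length_append] at hlens hlen
  have hq : G.pedges q = [] := List.length_eq_zero_iff.mp (by omega)
  have hq' : G.pedges q' = [] := List.length_eq_zero_iff.mp (by omega)
  have hedge : G.pedges p = G.pedges w := by
    have := congrArg G.pedges hw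
    rw [pedges_pcomp, pedges_pcomp, hq, hq'] at this
    simpa using this
  have hsrc : G.psrc p = G.psrc w := by
    have hsw : G.psrc w = G.psrc q' := by
      rw [← hw, psrc_pcomp, psrc_pcomp]
    rw [hsw, ← prng_eq_psrc_of_pedges_nil hq']
    exact h1
  exact path_ext hedge hsrc

lemma proper_factor_plen_lt {p w : G.Path} (h : IsFactor p w) (hne : p ≠ w) :
    G.plen p < G.plen w := by
  rcases lt_or_ge (G.plen p) (G.plen w) with h' | h'
  · exact h'
  · exact absurd (isFactor_eq_of_plen h h') hne

end DGraph

/-! ## The meet irreducible ideals `J_w` -/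

namespace DGraph

open scoped InnerProductSpace

variable {G : DGraph} {L : G.Path → (G.FockSpace →L[ℂ] G.FockSpace)}

lemma eq_zero_of_coeff_zero (hL : G.IsLeftRegular L) {A : G.FockSpace →L[ℂ] G.FockSpace}
    (hA : A ∈ G.LGset L) (h : ∀ p, coeff p A = 0) : A = 0 := by
  apply ext_xi A 0
  intro q
  rw [ContinuousLinearMap.zero_apply]
  apply vec_ext
  intro v
  rw [inner_zero_right]
  by_cases hex : ∃ (p₁ : G.Path) (hc : G.Composable p₁ q), G.pcomp p₁ q hc = v
  · obtain ⟨p₁, hc, rfl⟩ := hex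
    rw [coeff_eval hL hA hc]
    exact h p₁
  · exact coeff_eval_ne hL hA (fun p₁ hc heq => hex ⟨p₁, hc, heq⟩)

/-- The ideal of elements of `𝔏_G` all of whose coefficients at factors of `w` vanish. -/
def Jset (G : DGraph) (L : G.Path → (G.FockSpace →L[ℂ] G.FockSpace)) (w : G.Path) :
    Set (G.FockSpace →L[ℂ] G.FockSpace) :=
  {A | A ∈ G.LGset L ∧ ∀ p, IsFactor p w → coeff p A = 0}

lemma Jset_mul_left (hL : G.IsLeftRegular L) {w : G.Path}
    {a b : G.FockSpace →L[ℂ] G.FockSpace} (ha : a ∈ G.LGset L) (hb : b ∈ G.Jset L w) :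
    a * b ∈ G.Jset L w := by
  refine ⟨mul_mem_LGset ha hb.1, ?_⟩
  intro p hp
  have key := key_principle hL (b (G.xi (G.vpath (G.psrc p)))) (G.xi p) 0 0 ?_ ?_ ha
  · have : coeff p (a * b) =
        ⟪G.xi p, a (b (G.xi (G.vpath (G.psrc p))))⟫_ℂ := rfl
    rw [this, key, inner_zero_left]
  · rw [inner_zero_left]
    exact hb.2 p hp
  · intro u
    rw [inner_zero_left]
    by_cases hex : ∃ (p₀ : G.Path) (hc : G.Composable u p₀), G.pcomp u p₀ hc = p
    · obtain ⟨p₀, hc, rfl⟩ := hex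
      rw [inner_xi_L_comp hL hc]
      have h1 : G.psrc (G.pcomp u p₀ hc) = G.psrc p₀ := psrc_pcomp u p₀ hc
      rw [h1]
      exact hb.2 p₀ (isFactor_trans (isFactor_right hc) hp)
    · exact inner_xi_L_ncomp hL (fun p₀ hc heq => hex ⟨p₀, hc, heq⟩) _

lemma Jset_mul_right (hL : G.IsLeftRegular L) {w : G.Path}
    {a b : G.FockSpace →L[ℂ] G.FockSpace} (ha : a ∈ G.LGset L) (hb : b ∈ G.Jset L w) :
    b * a ∈ G.Jset L w := by
  refine ⟨mul_mem_LGset hb.1 ha, ?_⟩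
  intro p hp
  have key := key_principle hL (G.xi (G.vpath (G.psrc p)))
    (ContinuousLinearMap.adjoint b (G.xi p)) 0 0 ?_ ?_ ha
  · have : coeff p (b * a) =
        ⟪G.xi p, b (a (G.xi (G.vpath (G.psrc p))))⟫_ℂ := rfl
    rw [this, ← ContinuousLinearMap.adjoint_inner_left b, key, inner_zero_left]
  · rw [inner_zero_left, ContinuousLinearMap.adjoint_inner_left b]
    exact hb.2 p hp
  · intro u
    rw [inner_zero_left]
    by_cases hsrc : G.psrc u = G.psrc p
    · rw [← hsrc, L_xi_vpath_eq hL, ContinuousLinearMap.adjoint_inner_left b]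
      by_cases hex : ∃ (p₁ : G.Path) (hc : G.Composable p₁ u), G.pcomp p₁ u hc = p
      · obtain ⟨p₁, hc, rfl⟩ := hex
        rw [coeff_eval hL hb.1 hc]
        exact hb.2 p₁ (isFactor_trans (isFactor_left hc) hp)
      · exact coeff_eval_ne hL hb.1 (fun p₁ hc heq => hex ⟨p₁, hc, heq⟩)
    · rw [L_xi_vpath_ne hL u _ hsrc, inner_zero_right]

lemma Jset_wotClosed (w : G.Path) : wotClosure (G.Jset L w) = G.Jset L w := by
  have hJ : G.Jset L w = ((ContinuousLinearMapWOT.linearEquiv ℂ : (G.FockSpace →WOT[ℂ] G.FockSpace) ≃ₗ[ℂ] (G.FockSpace →L[ℂ] G.FockSpace)).symm) ⁻¹'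
      ((closure (((ContinuousLinearMapWOT.linearEquiv ℂ : (G.FockSpace →WOT[ℂ] G.FockSpace) ≃ₗ[ℂ] (G.FockSpace →L[ℂ] G.FockSpace)).symm) ''
        ((Algebra.adjoin ℂ (Set.range L) : Subalgebra ℂ _) : Set _))) ∩
       {a | ∀ p, IsFactor p w →
         ⟪G.xi p, (((ContinuousLinearMapWOT.linearEquiv ℂ : (G.FockSpace →WOT[ℂ] G.FockSpace) ≃ₗ[ℂ] (G.FockSpace →L[ℂ] G.FockSpace)).symm).symm a)
           (G.xi (G.vpath (G.psrc p)))⟫_ℂ = 0}) := by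
    ext A
    simp only [Set.mem_preimage, Set.mem_inter_iff, Set.mem_setOf_eq,
      LinearEquiv.symm_apply_apply]
    exact Iff.rfl
  rw [hJ]
  apply wotClosure_preimage_closed
  apply IsClosed.inter isClosed_closure
  have heq : {a : (G.FockSpace) →WOT[ℂ] (G.FockSpace) | ∀ p, IsFactor p w →
      ⟪G.xi p, (((ContinuousLinearMapWOT.linearEquiv ℂ : (G.FockSpace →WOT[ℂ] G.FockSpace) ≃ₗ[ℂ] (G.FockSpace →L[ℂ] G.FockSpace)).symm).symm a)
        (G.xi (G.vpath (G.psrc p)))⟫_ℂ = 0} =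
      ⋂ p, {a | IsFactor p w →
      ⟪G.xi p, (((ContinuousLinearMapWOT.linearEquiv ℂ : (G.FockSpace →WOT[ℂ] G.FockSpace) ≃ₗ[ℂ] (G.FockSpace →L[ℂ] G.FockSpace)).symm).symm a)
        (G.xi (G.vpath (G.psrc p)))⟫_ℂ = 0} := by
    ext a
    simp only [Set.mem_setOf_eq, Set.mem_iInter]
  rw [heq]
  apply isClosed_iInter
  intro p
  by_cases hp : IsFactor p w
  · simp only [hp, forall_true_left]
    exact isClosed_eq
      (ContinuousLinearMapWOT.continuous_dual_apply (G.xi (G.vpath (G.psrc p)))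
        (innerSL ℂ (G.xi p))) continuous_const
  · simp only [hp, false_implies, Set.setOf_true]
    exact isClosed_univ

lemma Jset_ideal (hL : G.IsLeftRegular L) (w : G.Path) :
    G.IsWotClosedIdeal L (G.Jset L w) := by
  refine ⟨fun A hA => hA.1, ⟨zero_mem_LGset, fun p _ => coeff_zero p⟩, ?_, ?_, ?_,
    Jset_wotClosed w⟩
  · intro a ha b hb
    exact ⟨add_mem_LGset ha.1 hb.1, fun p hp => by
      rw [coeff_add, ha.2 p hp, hb.2 p hp, add_zero]⟩
  · intro c a ha
    exact ⟨smul_mem_LGset c ha.1, fun p hp => by rw [coeff_smul, ha.2 p hp, mul_zero]⟩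
  · intro a ha b hb
    exact ⟨Jset_mul_left hL ha hb, Jset_mul_right hL ha hb⟩

/-- Conjugating by `L q`, `L q'` shifts coefficients. -/
lemma coeff_conj (hL : G.IsLeftRegular L) {z : G.FockSpace →L[ℂ] G.FockSpace}
    (hz : z ∈ G.LGset L) (q q' v : G.Path) :
    coeff v (L q * (z * L q')) = 0 ∨
    ∃ (u'' : G.Path) (hc1 : G.Composable u'' q')
      (hc2 : G.Composable q (G.pcomp u'' q' hc1)),
      G.pcomp q (G.pcomp u'' q' hc1) hc2 = v ∧
      coeff v (L q * (z * L q')) = coeff u'' z := by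
  have hrw : coeff v (L q * (z * L q')) =
      ⟪G.xi v, L q (z (L q' (G.xi (G.vpath (G.psrc v)))))⟫_ℂ := rfl
  by_cases hsrc : G.psrc q' = G.psrc v
  · rw [← hsrc, L_xi_vpath_eq hL] at hrw
    by_cases hex : ∃ (v₀ : G.Path) (hc : G.Composable q v₀), G.pcomp q v₀ hc = v
    · obtain ⟨v₀, hc, rfl⟩ := hex
      rw [inner_xi_L_comp hL hc] at hrw
      by_cases hex2 : ∃ (u'' : G.Path) (hc' : G.Composable u'' q'), G.pcomp u'' q' hc' = v₀
      · obtain ⟨u'', hc', rfl⟩ := hex2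
        rw [coeff_eval hL hz hc'] at hrw
        exact Or.inr ⟨u'', hc', hc, rfl, hrw⟩
      · rw [coeff_eval_ne hL hz (fun p₁ hcc heq => hex2 ⟨p₁, hcc, heq⟩)] at hrw
        exact Or.inl hrw
    · rw [inner_xi_L_ncomp hL (fun p₀ hc heq => hex ⟨p₀, hc, heq⟩)] at hrw
      exact Or.inl hrw
  · rw [L_xi_vpath_ne hL q' _ hsrc, map_zero, map_zero, inner_zero_right] at hrw
    exact Or.inl hrw

lemma coeff_conj_eq (hL : G.IsLeftRegular L) {z : G.FockSpace →L[ℂ] G.FockSpace}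
    (hz : z ∈ G.LGset L) {q u q' : G.Path} (h1 : G.Composable u q')
    (h2 : G.Composable q (G.pcomp u q' h1)) :
    coeff (G.pcomp q (G.pcomp u q' h1) h2) (L q * (z * L q')) = coeff u z := by
  set v := G.pcomp q (G.pcomp u q' h1) h2 with hv
  have hrw : coeff v (L q * (z * L q')) =
      ⟪G.xi v, L q (z (L q' (G.xi (G.vpath (G.psrc v)))))⟫_ℂ := rfl
  have hsrc : G.psrc q' = G.psrc v := by
    rw [hv, psrc_pcomp, psrc_pcomp]
  rw [← hsrc, L_xi_vpath_eq hL] at hrw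
  rw [hv] at hrw
  rw [inner_xi_L_comp hL h2, coeff_eval hL hz h1] at hrw
  rw [hv]
  exact hrw

/-- From any element of an ideal with a nonzero coefficient at a factor of `w`, extract an
element whose only nonzero coefficient among factors of `w` sits at `w` itself. -/
lemma extract (hL : G.IsLeftRegular L) {K : Set (G.FockSpace →L[ℂ] G.FockSpace)}
    (hsub : K ⊆ G.LGset L)
    (hmul : ∀ a ∈ G.LGset L, ∀ b ∈ K, a * b ∈ K ∧ b * a ∈ K)
    {w : G.Path} {z : G.FockSpace →L[ℂ] G.FockSpace} (hz : z ∈ K)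
    (hnz : ∃ p, IsFactor p w ∧ coeff p z ≠ 0) :
    ∃ B ∈ K, coeff w B ≠ 0 ∧ ∀ p, IsFactor p w → p ≠ w → coeff p B = 0 := by
  classical
  set P : ℕ → Prop := fun m => ∃ u, IsFactor u w ∧ coeff u z ≠ 0 ∧ G.plen u = m with hP
  have hPex : ∃ m, P m := by
    obtain ⟨p, hpf, hpc⟩ := hnz
    exact ⟨G.plen p, p, hpf, hpc, rfl⟩
  obtain ⟨u, hufac, hucoef, hulen⟩ := Nat.find_spec hPex
  have hmin : ∀ m, m < Nat.find hPex → ¬ P m := fun m hm => Nat.find_min hPex hm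
  obtain ⟨q, q', h1, h2, hw⟩ := hufac
  refine ⟨L q * (z * L q'), ?_, ?_, ?_⟩
  · exact (hmul (L q) (L_mem_LGset q) _ ((hmul (L q') (L_mem_LGset q') z hz).2)).1
  · rw [← hw, coeff_conj_eq hL (hsub hz) h1 h2]
    exact hucoef
  · intro p hpfac hpne
    rcases coeff_conj hL (hsub hz) q q' p with h0 | ⟨u'', hc1, hc2, heq, hval⟩
    · exact h0
    · by_contra hcon
      rw [hval] at hcon
      -- `u''` is a factor of `w` with a nonzero coefficient and length < plen u
      have hfac'' : IsFactor u'' w := by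
        refine isFactor_trans ?_ hpfac
        rw [← heq]
        exact isFactor_trans (isFactor_left hc1) (isFactor_right hc2)
      have hlt : G.plen p < G.plen w := proper_factor_plen_lt hpfac hpne
      have hlenp := congrArg G.plen heq
      have hlenw := congrArg G.plen hw
      simp only [plen_eq, pedges_pcomp, List.length_append] at hlenp hlenw hlt
      have hlen'' : G.plen u'' < G.plen u := by
        rw [plen_eq, plen_eq]
        omega
      rw [hulen] at hlen''
      exact hmin _ hlen'' ⟨u'', hfac'', hcon, rfl⟩

lemma Jset_meet_irreducible (hL : G.IsLeftRegular L) (w : G.Path) :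
    G.IsMeetIrreducible L (G.Jset L w) := by
  rintro ⟨J₁, J₂, hJ₁, hJ₂, hss₁, hss₂, heq⟩
  obtain ⟨y₁, hy₁J, hy₁⟩ := Set.exists_of_ssubset hss₁
  obtain ⟨y₂, hy₂J, hy₂⟩ := Set.exists_of_ssubset hss₂
  have hy₁nz : ∃ p, IsFactor p w ∧ coeff p y₁ ≠ 0 := by
    by_contra hcon
    push_neg at hcon
    exact hy₁ ⟨hJ₁.1 hy₁J, hcon⟩
  have hy₂nz : ∃ p, IsFactor p w ∧ coeff p y₂ ≠ 0 := by
    by_contra hcon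
    push_neg at hcon
    exact hy₂ ⟨hJ₂.1 hy₂J, hcon⟩
  obtain ⟨B₁, hB₁K, hB₁w, hB₁0⟩ :=
    extract hL hJ₁.1 hJ₁.2.2.2.2.1 hy₁J hy₁nz
  obtain ⟨B₂, hB₂K, hB₂w, hB₂0⟩ :=
    extract hL hJ₂.1 hJ₂.2.2.2.2.1 hy₂J hy₂nz
  set c₁ := coeff w B₁ with hc₁
  set c₂ := coeff w B₂ with hc₂
  have hD : c₂ • B₁ + (-c₁) • B₂ ∈ G.Jset L w := by
    refine ⟨add_mem_LGset (smul_mem_LGset c₂ (hJ₁.1 hB₁K)) (smul_mem_LGset (-c₁) (hJ₂.1 hB₂K)),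
      ?_⟩
    intro p hp
    rw [coeff_add, coeff_smul, coeff_smul]
    by_cases hpw : p = w
    · subst hpw
      ring
    · rw [hB₁0 p hp hpw, hB₂0 p hp hpw]
      ring
  have hDJ₂ : c₂ • B₁ + (-c₁) • B₂ ∈ J₂ := (heq ▸ hD).2
  have hB₁J₂ : c₂ • B₁ ∈ J₂ := by
    have hsum : (c₂ • B₁ + (-c₁) • B₂) + c₁ • B₂ = c₂ • B₁ := by
      rw [add_assoc, ← add_smul]
      simp
    rw [← hsum]
    exact hJ₂.2.2.1 _ hDJ₂ _ (hJ₂.2.2.2.1 c₁ _ hB₂K)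
  have hB₁J : c₂ • B₁ ∈ G.Jset L w := by
    rw [heq]
    exact ⟨hJ₁.2.2.2.1 c₂ _ hB₁K, hB₁J₂⟩
  have := hB₁J.2 w (isFactor_self w)
  rw [coeff_smul, ← hc₁] at this
  rcases mul_eq_zero.mp this with h | h
  · exact hB₂w h
  · exact hB₁w h

end DGraph


/-- **Corollary (Davidson–Katsoulis).**
The meet irreducible WOT-closed two-sided ideals of a free semigroupoid algebra `𝔏_G`
have zero intersection. -/
theorem meet_irreducible_ideals_have_zero_intersection
    (G : DGraph) (L : G.Path → (G.FockSpace →L[ℂ] G.FockSpace)) (hL : G.IsLeftRegular L) :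
    ∀ A ∈ G.LGset L,
      (∀ J, G.IsWotClosedIdeal L J → G.IsMeetIrreducible L J → A ∈ J) → A = 0 := by
  intro A hA hmeet
  apply DGraph.eq_zero_of_coeff_zero hL hA
  intro w
  exact (hmeet (G.Jset L w) (DGraph.Jset_ideal hL w)
    (DGraph.Jset_meet_irreducible hL w)).2 w (DGraph.isFactor_self w)
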